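/- Head–tail diameter bound: with τ = Σ_{i>k} p_i and cross-set diameter diam_{H,T} = max over i > k and j ≤ k of ‖v_i − v_j‖₂, the output error satisfies ‖ Σ_{i=1}^{n} p_i v_i − Σ_{i=1}^{n} p̂_i v_i ‖₂ ≤ τ · diam_{H,T}. -/

import Mathlib

theorem head_tail_diameter_bound (n k d : ℕ) (hk : 1 ≤ k) (hkn : k < n)
    (s : Fin n → ℝ) (hs : ∀ i j : Fin n, i ≤ j → s j ≤ s i)
    (p phat : Fin n → ℝ)
    (hp : ∀ i, p i = Real.exp (s i) / ∑ j, Real.exp (s j))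
    (hphat : ∀ i : Fin n, phat i =
      if (i : ℕ) < k then
        Real.exp (s i) /
          ∑ j ∈ Finset.univ.filter (fun j : Fin n => (j : ℕ) < k), Real.exp (s j)
      else 0)
    (v : Fin n → EuclideanSpace ℝ (Fin d))
    (τ : ℝ) (hτ : τ = ∑ i ∈ Finset.univ.filter (fun i : Fin n => k ≤ (i : ℕ)), p i)
    (D : ℝ)
    (hD : IsGreatest {x : ℝ | ∃ i j : Fin n, k ≤ (i : ℕ) ∧ (j : ℕ) < k ∧
      x = ‖v i - v j‖} D) :
    ‖(∑ i, p i • v i) - ∑ i, phat i • v i‖ ≤ τ * D := by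
  classical
  set H : Finset (Fin n) := Finset.univ.filter (fun j : Fin n => (j : ℕ) < k) with hHdef
  set T : Finset (Fin n) := Finset.univ.filter (fun i : Fin n => k ≤ (i : ℕ)) with hTdef
  set E : ℝ := ∑ j, Real.exp (s j) with hEdef
  set SH : ℝ := ∑ j ∈ H, Real.exp (s j) with hSHdef
  set ST : ℝ := ∑ j ∈ T, Real.exp (s j) with hSTdef
  have hj0 : ((⟨0, by omega⟩ : Fin n) : ℕ) < k := by show 0 < k; omega
  have hi0 : k ≤ ((⟨k, hkn⟩ : Fin n) : ℕ) := le_refl _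
  have hEpos : 0 < E := Finset.sum_pos (fun _ _ => Real.exp_pos _)
    ⟨⟨0, by omega⟩, Finset.mem_univ _⟩
  have hSHpos : 0 < SH := Finset.sum_pos (fun _ _ => Real.exp_pos _)
    ⟨⟨0, by omega⟩, by simp [hHdef, hj0]⟩
  have hSTpos : 0 < ST := Finset.sum_pos (fun _ _ => Real.exp_pos _)
    ⟨⟨k, hkn⟩, by simp [hTdef]⟩
  have hTeq : T = Finset.univ.filter (fun i : Fin n => ¬ ((i : ℕ) < k)) := by
    simp [hTdef, not_lt]
  have hsplit : SH + ST = E := by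
    rw [hSHdef, hSTdef, hEdef, hTeq]
    exact Finset.sum_filter_add_sum_filter_not _ _ _
  have hτ' : τ = ST / E := by
    rw [hτ, hSTdef, Finset.sum_div]
    exact Finset.sum_congr rfl fun i _ => hp i
  have hτpos : 0 < τ := hτ'.symm ▸ div_pos hSTpos hEpos
  -- bound on individual norms
  have hbound : ∀ i j : Fin n, i ∈ T → j ∈ H → ‖v i - v j‖ ≤ D := by
    intro i j hi hj
    rw [hTdef] at hi; rw [hHdef] at hj
    simp only [Finset.mem_filter] at hi hj
    exact hD.2 ⟨i, j, hi.2, hj.2, rfl⟩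
  -- phat - p is nonneg on H and sums to τ
  have hA : ∀ j ∈ H, 0 ≤ phat j - p j := by
    intro j hj
    rw [hHdef] at hj; simp only [Finset.mem_filter] at hj
    rw [hphat j, if_pos hj.2, hp j]
    have hSHE : SH ≤ E := by nlinarith
    have : Real.exp (s j) / E ≤ Real.exp (s j) / SH := by
      gcongr
    linarith
  have hB : ∑ j ∈ H, (phat j - p j) = τ := by
    rw [Finset.sum_sub_distrib]
    have h1 : ∑ j ∈ H, phat j = 1 := by
      have : ∑ j ∈ H, phat j = SH / SH := by
        rw [hSHdef, Finset.sum_div]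
        refine Finset.sum_congr rfl fun j hj => ?_
        rw [hHdef] at hj; simp only [Finset.mem_filter] at hj
        rw [hphat j, if_pos hj.2]
      rw [this, div_self hSHpos.ne']
    have h2 : ∑ j ∈ H, p j = SH / E := by
      rw [hSHdef, Finset.sum_div]
      exact Finset.sum_congr rfl fun j _ => hp j
    rw [h1, h2, hτ']
    field_simp
    linarith
  -- the key identity
  set c : Fin n → Fin n → ℝ := fun i j => p i * (phat j - p j) / τ with hcdef
  have hphat0 : ∀ i : Fin n, i ∉ H → phat i = 0 := by
    intro i hi
    rw [hHdef] at hi; simp only [Finset.mem_filter, Finset.mem_univ, true_and] at hi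
    rw [hphat i, if_neg hi]
  have hkey : (∑ i, p i • v i) - ∑ i, phat i • v i
      = ∑ i ∈ T, ∑ j ∈ H, c i j • (v i - v j) := by
    have hrow : ∀ i : Fin n, ∑ j ∈ H, c i j = p i := by
      intro i
      rw [hcdef]
      simp only
      rw [← Finset.sum_div, ← Finset.mul_sum, hB]
      field_simp
    have hcol : ∀ j : Fin n, ∑ i ∈ T, c i j = phat j - p j := by
      intro i
      rw [hcdef]
      simp only
      rw [← Finset.sum_div, ← Finset.sum_mul, ← hτ]
      field_simp
    have hL1 : (∑ i, p i • v i) = (∑ i ∈ H, p i • v i) + ∑ i ∈ T, p i • v i := by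
      rw [hTeq, hHdef]
      exact (Finset.sum_filter_add_sum_filter_not _ _ _).symm
    have hL2 : (∑ i, phat i • v i) = ∑ i ∈ H, phat i • v i := by
      refine (Finset.sum_subset (Finset.subset_univ H) ?_).symm
      intro i _ hi
      rw [hphat0 i hi, zero_smul]
    rw [hL1, hL2]
    have expand : ∑ i ∈ T, ∑ j ∈ H, c i j • (v i - v j)
        = (∑ i ∈ T, p i • v i) - ∑ j ∈ H, (phat j - p j) • v j := by
      have : ∀ i ∈ T, ∑ j ∈ H, c i j • (v i - v j)
          = p i • v i - ∑ j ∈ H, c i j • v j := by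
        intro i _
        simp only [smul_sub]
        rw [Finset.sum_sub_distrib, ← Finset.sum_smul, hrow]
      rw [Finset.sum_congr rfl this, Finset.sum_sub_distrib, Finset.sum_comm]
      congr 1
      refine Finset.sum_congr rfl fun j _ => ?_
      rw [← Finset.sum_smul, hcol]
    rw [expand]
    simp only [sub_smul]
    rw [Finset.sum_sub_distrib]
    abel
  rw [hkey]
  calc ‖∑ i ∈ T, ∑ j ∈ H, c i j • (v i - v j)‖
      ≤ ∑ i ∈ T, ∑ j ∈ H, ‖c i j • (v i - v j)‖ := by
        refine (norm_sum_le _ _).trans ?_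
        exact Finset.sum_le_sum fun i _ => norm_sum_le _ _
    _ ≤ ∑ i ∈ T, ∑ j ∈ H, c i j * D := by
        refine Finset.sum_le_sum fun i hi => Finset.sum_le_sum fun j hj => ?_
        have hc0 : 0 ≤ c i j := by
          rw [hcdef]
          have hp0 : 0 ≤ p i := by rw [hp i]; positivity
          exact div_nonneg (mul_nonneg hp0 (hA j hj)) hτpos.le
        rw [norm_smul, Real.norm_eq_abs, abs_of_nonneg hc0]
        exact mul_le_mul_of_nonneg_left (hbound i j hi hj) hc0
    _ = τ * D := by
        have : ∀ i ∈ T, ∑ j ∈ H, c i j * D = p i * D := by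
          intro i _
          rw [← Finset.sum_mul]
          rw [hcdef]
          simp only
          rw [← Finset.sum_div, ← Finset.mul_sum, hB]
          field_simp
        rw [Finset.sum_congr rfl this, ← Finset.sum_mul, ← hτ]
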